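/- Let s ≥ 2, m ≥ 0, k ≥ 2 and 0 ≤ j ≤ min(2s+m−2, k−1). Then the number of pairs (α,β) ∈ F_2^{s+k−1} × F_2^{s+m+k−1} satisfying rank M(s−1, s+m−1, k−1) = rank M(s−1, s+m−1, k) = j, rank M(s, s+m−1, k−1) = j, rank M(s, s+m−1, k) = j+1, rank M(s, s+m, k−1) = j, rank M(s, s+m, k) = j+1 equals twice the number of pairs (α,β) for which all six of these ranks equal j. -/

import Mathlib

open Matrix

/-- The submatrix `M(a', b', k')` of the double persymmetric matrix `D(α, β)`:
its rows are the first `a'` rows of the `α`-Hankel block and the first `b'` rows of the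
`β`-Hankel block, and it keeps the first `k'` columns. -/
def subMat (s m k a' b' k' : ℕ) (α : Fin (s + k - 1) → ZMod 2)
    (β : Fin (s + m + k - 1) → ZMod 2) :
    Matrix (Fin a' ⊕ Fin b') (Fin k') (ZMod 2) :=
  Matrix.of fun r j =>
    Sum.elim
      (fun i : Fin a' =>
        if h : (i : ℕ) + (j : ℕ) < s + k - 1 then α ⟨(i : ℕ) + (j : ℕ), h⟩ else 0)
      (fun i : Fin b' =>
        if h : (i : ℕ) + (j : ℕ) < s + m + k - 1 then β ⟨(i : ℕ) + (j : ℕ), h⟩ else 0) r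

/-- The rank over `F_2` of the submatrix `M(a', b', k')`. -/
noncomputable def subRank (s m k a' b' k' : ℕ) (α : Fin (s + k - 1) → ZMod 2)
    (β : Fin (s + m + k - 1) → ZMod 2) : ℕ :=
  (subMat s m k a' b' k' α β).rank

set_option linter.unusedSectionVars false
set_option maxHeartbeats 1000000

open Module

section RankHelpers

variable {K : Type*} [Field K] {R R' : Type*} [Fintype R] [Fintype R'] {n : ℕ}

private lemma mulVecLin_rows (A : Matrix R (Fin n) K) (f : R' → R) :
    (A.submatrix f id).mulVecLin = (LinearMap.funLeft K K f).comp A.mulVecLin := by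
  apply LinearMap.ext; intro v; funext r'; rfl

private lemma rank_submatrix_rows_le (A : Matrix R (Fin n) K) (f : R' → R) :
    (A.submatrix f id).rank ≤ A.rank := by
  rw [Matrix.rank, Matrix.rank, mulVecLin_rows, LinearMap.range_comp]
  exact Submodule.finrank_map_le _ _

private lemma range_castSucc_le (A : Matrix R (Fin (n + 1)) K) :
    LinearMap.range (A.submatrix id Fin.castSucc).mulVecLin ≤ LinearMap.range A.mulVecLin := by
  rintro x ⟨u, rfl⟩
  refine ⟨Fin.snoc u 0, ?_⟩
  funext r
  simp [Matrix.mulVecLin_apply, Matrix.mulVec, dotProduct, Fin.sum_univ_castSucc]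

private lemma rank_castSucc_le (A : Matrix R (Fin (n + 1)) K) :
    (A.submatrix id Fin.castSucc).rank ≤ A.rank :=
  Submodule.finrank_mono (range_castSucc_le A)

private lemma col_mem_range (A : Matrix R (Fin (n + 1)) K) :
    (fun r => A r (Fin.last n)) ∈ LinearMap.range A.mulVecLin := by
  classical
  refine ⟨Pi.single (Fin.last n) 1, ?_⟩
  funext r
  simp [Matrix.mulVecLin_apply, Matrix.mulVec, dotProduct, Pi.single_apply]

private lemma mulVec_decomp (A : Matrix R (Fin (n + 1)) K) (v : Fin (n + 1) → K) :
    A.mulVec v = (A.submatrix id Fin.castSucc).mulVec (v ∘ Fin.castSucc)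
      + v (Fin.last n) • (fun r => A r (Fin.last n)) := by
  funext r
  simp [Matrix.mulVec, dotProduct, Fin.sum_univ_castSucc, mul_comm]

private lemma rank_le_castSucc_add_one (A : Matrix R (Fin (n + 1)) K) :
    A.rank ≤ (A.submatrix id Fin.castSucc).rank + 1 := by
  classical
  have hle : LinearMap.range A.mulVecLin ≤
      LinearMap.range (A.submatrix id Fin.castSucc).mulVecLin ⊔
        (K ∙ (fun r => A r (Fin.last n))) := by
    rintro x ⟨v, rfl⟩
    rw [Matrix.mulVecLin_apply, mulVec_decomp]
    exact Submodule.add_mem_sup ⟨v ∘ Fin.castSucc, rfl⟩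
      (Submodule.smul_mem _ _ (Submodule.mem_span_singleton_self _))
  have h1 : finrank K (K ∙ (fun r => A r (Fin.last n)) : Submodule K (R → K)) ≤ 1 := by
    by_cases hc : (fun r => A r (Fin.last n)) = (0 : R → K)
    · rw [hc, Submodule.span_zero_singleton, finrank_bot]; omega
    · rw [finrank_span_singleton hc]
  calc A.rank ≤ finrank K (LinearMap.range (A.submatrix id Fin.castSucc).mulVecLin ⊔
        (K ∙ (fun r => A r (Fin.last n))) : Submodule K (R → K)) :=
        Submodule.finrank_mono hle
    _ ≤ (A.submatrix id Fin.castSucc).rank +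
        finrank K (K ∙ (fun r => A r (Fin.last n)) : Submodule K (R → K)) :=
        Submodule.finrank_add_le_finrank_add_finrank _ _
    _ ≤ (A.submatrix id Fin.castSucc).rank + 1 := by omega

private lemma rank_eq_of_col_mem (A : Matrix R (Fin (n + 1)) K)
    (h : (fun r => A r (Fin.last n)) ∈
      LinearMap.range (A.submatrix id Fin.castSucc).mulVecLin) :
    A.rank = (A.submatrix id Fin.castSucc).rank := by
  refine le_antisymm ?_ (rank_castSucc_le A)
  obtain ⟨u, hu⟩ := h
  apply Submodule.finrank_mono
  rintro x ⟨v, rfl⟩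
  refine ⟨(v ∘ Fin.castSucc) + v (Fin.last n) • u, ?_⟩
  have hu' : (A.submatrix id Fin.castSucc) *ᵥ u = fun r => A r (Fin.last n) := hu
  rw [Matrix.mulVecLin_apply, Matrix.mulVecLin_apply, Matrix.mulVec_add,
    Matrix.mulVec_smul, hu']
  exact (mulVec_decomp A v).symm

private lemma col_mem_of_rank_eq (A : Matrix R (Fin (n + 1)) K)
    (h : A.rank = (A.submatrix id Fin.castSucc).rank) :
    (fun r => A r (Fin.last n)) ∈
      LinearMap.range (A.submatrix id Fin.castSucc).mulVecLin := by
  have hle := range_castSucc_le A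
  have heq : LinearMap.range (A.submatrix id Fin.castSucc).mulVecLin
      = LinearMap.range A.mulVecLin :=
    Submodule.eq_of_le_of_finrank_le hle (le_of_eq h)
  rw [heq]
  exact col_mem_range A

private lemma eq_zero_of_proj (A : Matrix R (Fin n) K) (f : R' → R)
    (h : (A.submatrix f id).rank = A.rank)
    (v : R → K) (hv : v ∈ LinearMap.range A.mulVecLin) (hv0 : ∀ r', v (f r') = 0) :
    v = 0 := by
  classical
  set p := LinearMap.range A.mulVecLin with hp
  set L := LinearMap.funLeft K K f with hL
  have hrange : LinearMap.range (A.submatrix f id).mulVecLin = p.map L := by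
    rw [mulVecLin_rows, LinearMap.range_comp]
  have hfr : finrank K (p.map L) = finrank K p := by
    rw [← hrange]
    rw [Matrix.rank, Matrix.rank] at h
    exact h
  have h1 := LinearMap.finrank_range_add_finrank_ker (L.domRestrict p)
  have h2 : LinearMap.range (L.domRestrict p) = p.map L := by
    ext y
    simp [LinearMap.mem_range, Submodule.mem_map, LinearMap.domRestrict_apply]
  have hker : finrank K (LinearMap.ker (L.domRestrict p)) = 0 := by
    rw [h2, hfr] at h1
    omega
  have hbot : LinearMap.ker (L.domRestrict p) = ⊥ := Submodule.finrank_eq_zero.mp hker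
  have hmem : (⟨v, hv⟩ : p) ∈ LinearMap.ker (L.domRestrict p) := by
    rw [LinearMap.mem_ker, LinearMap.domRestrict_apply]
    funext r'
    exact hv0 r'
  rw [hbot, Submodule.mem_bot] at hmem
  exact congrArg Subtype.val hmem

end RankHelpers


section Dich

variable {R R' : Type*} [Fintype R] [Fintype R'] [DecidableEq R] {n j : ℕ}

private lemma zmod2_add_one_add (x : ZMod 2) : x + 1 + x = 1 := by revert x; decide
private lemma zmod2_add_self (x : ZMod 2) : x + x = 0 := by revert x; decide
private lemma zmod2_ne (x y : ZMod 2) (h : x ≠ y) : x = y + 1 := by revert h; revert x y; decide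

private lemma dichotomy
    (A B : Matrix R (Fin (n + 1)) (ZMod 2)) (f : R' → R) (r0 : R)
    (hfr : ∀ r', f r' ≠ r0) (hsurj : ∀ r, r ≠ r0 → ∃ r', f r' = r)
    (hB : ∀ r c, B r c = if r = r0 ∧ c = Fin.last n then A r c + 1 else A r c)
    (h1 : (A.submatrix f Fin.castSucc).rank = j)
    (h2 : (A.submatrix f id).rank = j)
    (h3 : (A.submatrix id Fin.castSucc).rank = j) :
    (A.rank = j ∧ B.rank = j + 1) ∨ (A.rank = j + 1 ∧ B.rank = j) := by
  classical
  -- the common left part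
  have hNB : B.submatrix id Fin.castSucc = A.submatrix id Fin.castSucc := by
    ext r c
    rw [Matrix.submatrix_apply, Matrix.submatrix_apply, hB, if_neg]
    rintro ⟨-, hc⟩
    exact (Fin.castSucc_lt_last c).ne hc
  have hsub2 : (A.submatrix f id).submatrix id Fin.castSucc = A.submatrix f Fin.castSucc := by
    rw [Matrix.submatrix_submatrix]
    rfl
  -- bounds
  have hA1 : j ≤ A.rank := h3 ▸ rank_castSucc_le A
  have hA2 : A.rank ≤ j + 1 := by
    have := rank_le_castSucc_add_one A
    omega
  have hB1 : j ≤ B.rank := by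
    have := rank_castSucc_le B
    rw [hNB, h3] at this
    exact this
  have hB2 : B.rank ≤ j + 1 := by
    have := rank_le_castSucc_add_one B
    rw [hNB, h3] at this
    exact this
  -- column abbreviations
  set cA : R → ZMod 2 := fun r => A r (Fin.last n) with hcA
  have hcB : ∀ r, B r (Fin.last n) = if r = r0 then cA r + 1 else cA r := by
    intro r
    rw [hB]
    by_cases h : r = r0
    · rw [if_pos ⟨h, rfl⟩, if_pos h]
    · rw [if_neg (by tauto), if_neg h]
  -- not both equal to j
  have hX : ¬ (A.rank = j ∧ B.rank = j) := by
    rintro ⟨hA, hB'⟩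
    have mA : cA ∈ LinearMap.range (A.submatrix id Fin.castSucc).mulVecLin :=
      col_mem_of_rank_eq A (by rw [hA, h3])
    have mB : (fun r => B r (Fin.last n)) ∈
        LinearMap.range (A.submatrix id Fin.castSucc).mulVecLin := by
      have := col_mem_of_rank_eq B (by rw [hB', hNB, h3])
      rwa [hNB] at this
    have me : (cA + fun r => B r (Fin.last n)) ∈
        LinearMap.range (A.submatrix id Fin.castSucc).mulVecLin :=
      Submodule.add_mem _ mA mB
    have hval : (cA + fun r => B r (Fin.last n)) = fun r => if r = r0 then 1 else 0 := by
      funext r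
      rw [Pi.add_apply, hcB r]
      by_cases h : r = r0
      · rw [if_pos h, if_pos h]
        exact (by rw [add_comm]; exact zmod2_add_one_add (cA r))
      · rw [if_neg h, if_neg h]
        exact zmod2_add_self (cA r)
    have hzero := eq_zero_of_proj (A.submatrix id Fin.castSucc) f
      (by rw [show (A.submatrix id Fin.castSucc).submatrix f id = A.submatrix f Fin.castSucc by
            rw [Matrix.submatrix_submatrix]; rfl, h1, h3])
      _ me (by
        intro r'
        rw [hval]
        exact if_neg (hfr r'))
    rw [hval] at hzero
    have : (1 : ZMod 2) = 0 := by
      have := congrFun hzero r0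
      simpa using this
    exact absurd this (by decide)
  -- not both equal to j + 1
  have hY : ¬ (A.rank = j + 1 ∧ B.rank = j + 1) := by
    rintro ⟨hA, hB'⟩
    have hmem : (fun r' => (A.submatrix f id) r' (Fin.last n)) ∈
        LinearMap.range ((A.submatrix f id).submatrix id Fin.castSucc).mulVecLin :=
      col_mem_of_rank_eq (A.submatrix f id) (by rw [h2, hsub2, h1])
    obtain ⟨u, hu⟩ := hmem
    set d : R → ZMod 2 := (A.submatrix id Fin.castSucc) *ᵥ u with hd
    have hdf : ∀ r', d (f r') = cA (f r') := by
      intro r'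
      have := congrFun hu r'
      exact this
    by_cases hr0 : d r0 = cA r0
    · have hdc : (A.submatrix id Fin.castSucc) *ᵥ u = cA := by
        funext r
        by_cases h : r = r0
        · rw [h]; exact hr0
        · obtain ⟨r', rfl⟩ := hsurj r h
          exact hdf r'
      have : A.rank = j := by
        rw [rank_eq_of_col_mem A ⟨u, hdc⟩, h3]
      omega
    · have hdc : (A.submatrix id Fin.castSucc) *ᵥ u = fun r => B r (Fin.last n) := by
        funext r
        rw [hcB r]
        by_cases h : r = r0
        · rw [if_pos h, h]
          exact zmod2_ne _ _ (h ▸ hr0)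
        · rw [if_neg h]
          obtain ⟨r', rfl⟩ := hsurj r h
          exact hdf r'
      have : B.rank = j := by
        rw [rank_eq_of_col_mem B (by rw [hNB]; exact ⟨u, hdc⟩), hNB, h3]
      omega
  have hAor : A.rank = j ∨ A.rank = j + 1 := by omega
  have hBor : B.rank = j ∨ B.rank = j + 1 := by omega
  rcases hAor with hA | hA <;> rcases hBor with hB' | hB'
  · exact absurd ⟨hA, hB'⟩ hX
  · exact Or.inl ⟨hA, hB'⟩
  · exact Or.inr ⟨hA, hB'⟩
  · exact absurd ⟨hA, hB'⟩ hY

end Dich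

section SubMat

private lemma subMat_cols (s m k a' b' kc : ℕ) (α : Fin (s + k - 1) → ZMod 2)
    (β : Fin (s + m + k - 1) → ZMod 2) :
    (subMat s m k a' b' (kc + 1) α β).submatrix id Fin.castSucc
      = subMat s m k a' b' kc α β := by
  ext r c
  cases r with
  | inl i => rfl
  | inr i => rfl

private lemma subMat_rows_fst (s m k a'' a' b' kc : ℕ) (h : a'' ≤ a')
    (α : Fin (s + k - 1) → ZMod 2) (β : Fin (s + m + k - 1) → ZMod 2) :
    (subMat s m k a' b' kc α β).submatrix (Sum.map (Fin.castLE h) id) id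
      = subMat s m k a'' b' kc α β := by
  ext r c
  cases r with
  | inl i => rfl
  | inr i => rfl

private lemma subMat_rows_snd (s m k a' b'' b' kc : ℕ) (h : b'' ≤ b')
    (α : Fin (s + k - 1) → ZMod 2) (β : Fin (s + m + k - 1) → ZMod 2) :
    (subMat s m k a' b' kc α β).submatrix (Sum.map id (Fin.castLE h)) id
      = subMat s m k a' b'' kc α β := by
  ext r c
  cases r with
  | inl i => rfl
  | inr i => rfl

private lemma subMat_update_fst (s m k a' b' kc : ℕ) (h : a' + kc ≤ s + k - 1)
    (idx : Fin (s + k - 1)) (hidx : (idx : ℕ) + 1 = s + k - 1) (v : ZMod 2)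
    (α : Fin (s + k - 1) → ZMod 2) (β : Fin (s + m + k - 1) → ZMod 2) :
    subMat s m k a' b' kc (Function.update α idx v) β = subMat s m k a' b' kc α β := by
  ext r c
  cases r with
  | inl i =>
    have hi := i.isLt
    have hc := c.isLt
    simp only [subMat, Matrix.of_apply, Sum.elim_inl]
    split
    · next h' =>
        have hne : (⟨(i : ℕ) + (c : ℕ), h'⟩ : Fin (s + k - 1)) ≠ idx := by
          apply Fin.ne_of_val_ne
          show (i : ℕ) + (c : ℕ) ≠ (idx : ℕ)
          omega
        exact Function.update_of_ne hne v α
    · rfl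
  | inr i => rfl

private lemma subMat_update_snd (s m k a' b' kc : ℕ) (h : b' + kc ≤ s + m + k - 1)
    (idx : Fin (s + m + k - 1)) (hidx : (idx : ℕ) + 1 = s + m + k - 1) (v : ZMod 2)
    (α : Fin (s + k - 1) → ZMod 2) (β : Fin (s + m + k - 1) → ZMod 2) :
    subMat s m k a' b' kc α (Function.update β idx v) = subMat s m k a' b' kc α β := by
  ext r c
  cases r with
  | inl i => rfl
  | inr i =>
    have hi := i.isLt
    have hc := c.isLt
    simp only [subMat, Matrix.of_apply, Sum.elim_inr]
    split
    · next h' =>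
        have hne : (⟨(i : ℕ) + (c : ℕ), h'⟩ : Fin (s + m + k - 1)) ≠ idx := by
          apply Fin.ne_of_val_ne
          show (i : ℕ) + (c : ℕ) ≠ (idx : ℕ)
          omega
        exact Function.update_of_ne hne v β
    · rfl

private lemma subMat_flip_fst (s' m k' b' : ℕ)
    (idx : Fin (s' + 1 + (k' + 1) - 1)) (hidx : (idx : ℕ) = s' + k')
    (α : Fin (s' + 1 + (k' + 1) - 1) → ZMod 2)
    (β : Fin (s' + 1 + m + (k' + 1) - 1) → ZMod 2)
    (r : Fin (s' + 1) ⊕ Fin b') (c : Fin (k' + 1)) :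
    subMat (s' + 1) m (k' + 1) (s' + 1) b' (k' + 1)
        (Function.update α idx (α idx + 1)) β r c =
      (if r = Sum.inl (Fin.last s') ∧ c = Fin.last k'
        then subMat (s' + 1) m (k' + 1) (s' + 1) b' (k' + 1) α β r c + 1
        else subMat (s' + 1) m (k' + 1) (s' + 1) b' (k' + 1) α β r c) := by
  cases r with
  | inl i =>
    have hi := i.isLt
    have hc := c.isLt
    have hlt : (i : ℕ) + (c : ℕ) < s' + 1 + (k' + 1) - 1 := by omega
    simp only [subMat, Matrix.of_apply, Sum.elim_inl, dif_pos hlt, Sum.inl.injEq,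
      Function.update_apply]
    by_cases hic : (i : ℕ) + (c : ℕ) = s' + k'
    · have e1 : (⟨(i : ℕ) + (c : ℕ), hlt⟩ : Fin (s' + 1 + (k' + 1) - 1)) = idx := by
        apply Fin.ext; simp [hidx, hic]
      have e2 : i = Fin.last s' := by apply Fin.ext; simp [Fin.last]; omega
      have e3 : c = Fin.last k' := by apply Fin.ext; simp [Fin.last]; omega
      rw [if_pos e1, if_pos ⟨e2, e3⟩, ← e1]
    · have e1 : (⟨(i : ℕ) + (c : ℕ), hlt⟩ : Fin (s' + 1 + (k' + 1) - 1)) ≠ idx := by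
        apply Fin.ne_of_val_ne; simp [hidx]; omega
      have e2 : ¬ (i = Fin.last s' ∧ c = Fin.last k') := by
        rintro ⟨rfl, rfl⟩
        simp [Fin.last] at hic
      rw [if_neg e1, if_neg e2]
  | inr i =>
    rw [if_neg (by rintro ⟨h, -⟩; exact Sum.inr_ne_inl h)]
    rfl

private lemma subMat_flip_snd (s' m k' : ℕ)
    (idx : Fin (s' + 1 + m + (k' + 1) - 1)) (hidx : (idx : ℕ) = s' + m + k')
    (r0 : Fin (s' + 1 + m)) (hr0 : (r0 : ℕ) = s' + m)
    (α : Fin (s' + 1 + (k' + 1) - 1) → ZMod 2)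
    (β : Fin (s' + 1 + m + (k' + 1) - 1) → ZMod 2)
    (r : Fin (s' + 1) ⊕ Fin (s' + 1 + m)) (c : Fin (k' + 1)) :
    subMat (s' + 1) m (k' + 1) (s' + 1) (s' + 1 + m) (k' + 1)
        α (Function.update β idx (β idx + 1)) r c =
      (if r = Sum.inr r0 ∧ c = Fin.last k'
        then subMat (s' + 1) m (k' + 1) (s' + 1) (s' + 1 + m) (k' + 1) α β r c + 1
        else subMat (s' + 1) m (k' + 1) (s' + 1) (s' + 1 + m) (k' + 1) α β r c) := by
  cases r with
  | inl i =>
    rw [if_neg (by rintro ⟨h, -⟩; exact Sum.inl_ne_inr h)]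
    rfl
  | inr i =>
    have hi := i.isLt
    have hc := c.isLt
    have hlt : (i : ℕ) + (c : ℕ) < s' + 1 + m + (k' + 1) - 1 := by omega
    simp only [subMat, Matrix.of_apply, Sum.elim_inr, dif_pos hlt, Sum.inr.injEq,
      Function.update_apply]
    by_cases hic : (i : ℕ) + (c : ℕ) = s' + m + k'
    · have e1 : (⟨(i : ℕ) + (c : ℕ), hlt⟩ : Fin (s' + 1 + m + (k' + 1) - 1)) = idx := by
        apply Fin.ext; simp [hidx, hic]
      have e2 : i = r0 := by apply Fin.ext; simp [hr0]; omega
      have e3 : c = Fin.last k' := by apply Fin.ext; simp [Fin.last]; omega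
      rw [if_pos e1, if_pos ⟨e2, e3⟩, ← e1]
    · have e1 : (⟨(i : ℕ) + (c : ℕ), hlt⟩ : Fin (s' + 1 + m + (k' + 1) - 1)) ≠ idx := by
        apply Fin.ne_of_val_ne; simp [hidx]; omega
      have e2 : ¬ (i = r0 ∧ c = Fin.last k') := by
        rintro ⟨rfl, rfl⟩
        have hl := Fin.val_last k'
        omega
      rw [if_neg e1, if_neg e2]

end SubMat

section Flips

private def flipA (s' m k' : ℕ)
    (p : (Fin (s' + 1 + (k' + 1) - 1) → ZMod 2) × (Fin (s' + 1 + m + (k' + 1) - 1) → ZMod 2)) :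
    (Fin (s' + 1 + (k' + 1) - 1) → ZMod 2) × (Fin (s' + 1 + m + (k' + 1) - 1) → ZMod 2) :=
  (Function.update p.1 ⟨s' + k', by omega⟩ (p.1 ⟨s' + k', by omega⟩ + 1), p.2)

private def flipB (s' m k' : ℕ)
    (p : (Fin (s' + 1 + (k' + 1) - 1) → ZMod 2) × (Fin (s' + 1 + m + (k' + 1) - 1) → ZMod 2)) :
    (Fin (s' + 1 + (k' + 1) - 1) → ZMod 2) × (Fin (s' + 1 + m + (k' + 1) - 1) → ZMod 2) :=
  (p.1, Function.update p.2 ⟨s' + m + k', by omega⟩ (p.2 ⟨s' + m + k', by omega⟩ + 1))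

private lemma zmod2_add_one_one (x : ZMod 2) : x + 1 + 1 = x := by revert x; decide

private lemma update_flip_inv {γ : Type*} [DecidableEq γ] (f : γ → ZMod 2) (i : γ) :
    Function.update (Function.update f i (f i + 1)) i
      ((Function.update f i (f i + 1)) i + 1) = f := by
  rw [Function.update_self, Function.update_idem, zmod2_add_one_one, Function.update_eq_self]

private lemma flipA_inv (s' m k' : ℕ) : Function.Involutive (flipA s' m k') := by
  intro p
  unfold flipA
  refine Prod.ext ?_ rfl
  show Function.update (Function.update p.1 ⟨s' + k', by omega⟩ (p.1 ⟨s' + k', by omega⟩ + 1))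
      ⟨s' + k', by omega⟩
      ((Function.update p.1 ⟨s' + k', by omega⟩ (p.1 ⟨s' + k', by omega⟩ + 1))
        ⟨s' + k', by omega⟩ + 1) = p.1
  exact update_flip_inv p.1 _

private lemma flipB_inv (s' m k' : ℕ) : Function.Involutive (flipB s' m k') := by
  intro p
  unfold flipB
  refine Prod.ext rfl ?_
  show Function.update
      (Function.update p.2 ⟨s' + m + k', by omega⟩ (p.2 ⟨s' + m + k', by omega⟩ + 1))
      ⟨s' + m + k', by omega⟩
      ((Function.update p.2 ⟨s' + m + k', by omega⟩ (p.2 ⟨s' + m + k', by omega⟩ + 1))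
        ⟨s' + m + k', by omega⟩ + 1) = p.2
  exact update_flip_inv p.2 _

private lemma rk_flipA (s' m k' : ℕ) (a' b' kc : ℕ) (h : a' + kc ≤ s' + 1 + (k' + 1) - 1)
    (p : (Fin (s' + 1 + (k' + 1) - 1) → ZMod 2) × (Fin (s' + 1 + m + (k' + 1) - 1) → ZMod 2)) :
    subRank (s' + 1) m (k' + 1) a' b' kc (flipA s' m k' p).1 (flipA s' m k' p).2
      = subRank (s' + 1) m (k' + 1) a' b' kc p.1 p.2 := by
  unfold flipA subRank
  exact congrArg Matrix.rank (subMat_update_fst (s' + 1) m (k' + 1) a' b' kc h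
    ⟨s' + k', by omega⟩ (by show s' + k' + 1 = s' + 1 + (k' + 1) - 1; omega) _ p.1 p.2)

private lemma rk_flipB (s' m k' : ℕ) (a' b' kc : ℕ) (h : b' + kc ≤ s' + 1 + m + (k' + 1) - 1)
    (p : (Fin (s' + 1 + (k' + 1) - 1) → ZMod 2) × (Fin (s' + 1 + m + (k' + 1) - 1) → ZMod 2)) :
    subRank (s' + 1) m (k' + 1) a' b' kc (flipB s' m k' p).1 (flipB s' m k' p).2
      = subRank (s' + 1) m (k' + 1) a' b' kc p.1 p.2 := by
  unfold flipB subRank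
  exact congrArg Matrix.rank (subMat_update_snd (s' + 1) m (k' + 1) a' b' kc h
    ⟨s' + m + k', by omega⟩ (by show s' + m + k' + 1 = s' + 1 + m + (k' + 1) - 1; omega) _ p.1 p.2)

end Flips

section Dich46

private lemma dich4 (s' m k' j : ℕ)
    (p : (Fin (s' + 1 + (k' + 1) - 1) → ZMod 2) × (Fin (s' + 1 + m + (k' + 1) - 1) → ZMod 2))
    (h1 : subRank (s' + 1) m (k' + 1) s' (s' + 1 + m - 1) k' p.1 p.2 = j)
    (h2 : subRank (s' + 1) m (k' + 1) s' (s' + 1 + m - 1) (k' + 1) p.1 p.2 = j)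
    (h3 : subRank (s' + 1) m (k' + 1) (s' + 1) (s' + 1 + m - 1) k' p.1 p.2 = j) :
    (subRank (s' + 1) m (k' + 1) (s' + 1) (s' + 1 + m - 1) (k' + 1) p.1 p.2 = j ∧
      subRank (s' + 1) m (k' + 1) (s' + 1) (s' + 1 + m - 1) (k' + 1)
        (flipA s' m k' p).1 (flipA s' m k' p).2 = j + 1) ∨
    (subRank (s' + 1) m (k' + 1) (s' + 1) (s' + 1 + m - 1) (k' + 1) p.1 p.2 = j + 1 ∧
      subRank (s' + 1) m (k' + 1) (s' + 1) (s' + 1 + m - 1) (k' + 1)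
        (flipA s' m k' p).1 (flipA s' m k' p).2 = j) := by
  classical
  set A := subMat (s' + 1) m (k' + 1) (s' + 1) (s' + 1 + m - 1) (k' + 1) p.1 p.2 with hA
  set B := subMat (s' + 1) m (k' + 1) (s' + 1) (s' + 1 + m - 1) (k' + 1)
    (flipA s' m k' p).1 (flipA s' m k' p).2 with hBdef
  have hfr : ∀ r' : Fin s' ⊕ Fin (s' + 1 + m - 1),
      Sum.map (Fin.castLE (Nat.le_succ s')) id r' ≠ Sum.inl (Fin.last s') := by
    rintro (a | b) h
    · simp only [Sum.map_inl, Sum.inl.injEq] at h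
      have ha := a.isLt
      have hv := congrArg Fin.val h
      simp only [Fin.coe_castLE, Fin.val_last] at hv
      omega
    · simp only [Sum.map_inr, id_eq] at h
      exact Sum.inr_ne_inl h
  have hsurj : ∀ r : Fin (s' + 1) ⊕ Fin (s' + 1 + m - 1), r ≠ Sum.inl (Fin.last s') →
      ∃ r', Sum.map (Fin.castLE (Nat.le_succ s')) id r' = r := by
    rintro (a | b) h
    · have hv : (a : ℕ) ≠ s' := by
        intro hv
        exact h (congrArg Sum.inl (Fin.ext (by simp [hv, Fin.val_last])))
      have ha := a.isLt
      refine ⟨Sum.inl ⟨(a : ℕ), by omega⟩, ?_⟩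
      simp only [Sum.map_inl]
      exact congrArg Sum.inl (Fin.ext rfl)
    · exact ⟨Sum.inr b, rfl⟩
  have hB : ∀ r c, B r c =
      if r = Sum.inl (Fin.last s') ∧ c = Fin.last k' then A r c + 1 else A r c := by
    intro r c
    rw [hBdef, hA]
    exact subMat_flip_fst s' m k' (s' + 1 + m - 1) ⟨s' + k', by omega⟩ rfl p.1 p.2 r c
  have e1 : A.submatrix (Sum.map (Fin.castLE (Nat.le_succ s')) id) Fin.castSucc
      = subMat (s' + 1) m (k' + 1) s' (s' + 1 + m - 1) k' p.1 p.2 := by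
    rw [hA]; ext r c; cases r <;> rfl
  have e2 : A.submatrix (Sum.map (Fin.castLE (Nat.le_succ s')) id) id
      = subMat (s' + 1) m (k' + 1) s' (s' + 1 + m - 1) (k' + 1) p.1 p.2 := by
    rw [hA]; ext r c; cases r <;> rfl
  have e3 : A.submatrix id Fin.castSucc
      = subMat (s' + 1) m (k' + 1) (s' + 1) (s' + 1 + m - 1) k' p.1 p.2 := by
    rw [hA]; ext r c; cases r <;> rfl
  exact dichotomy A B (Sum.map (Fin.castLE (Nat.le_succ s')) id) (Sum.inl (Fin.last s'))
    hfr hsurj hB (by rw [e1]; exact h1) (by rw [e2]; exact h2) (by rw [e3]; exact h3)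

private lemma dich6 (s' m k' j : ℕ)
    (p : (Fin (s' + 1 + (k' + 1) - 1) → ZMod 2) × (Fin (s' + 1 + m + (k' + 1) - 1) → ZMod 2))
    (h3 : subRank (s' + 1) m (k' + 1) (s' + 1) (s' + 1 + m - 1) k' p.1 p.2 = j)
    (h4 : subRank (s' + 1) m (k' + 1) (s' + 1) (s' + 1 + m - 1) (k' + 1) p.1 p.2 = j)
    (h5 : subRank (s' + 1) m (k' + 1) (s' + 1) (s' + 1 + m) k' p.1 p.2 = j) :
    (subRank (s' + 1) m (k' + 1) (s' + 1) (s' + 1 + m) (k' + 1) p.1 p.2 = j ∧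
      subRank (s' + 1) m (k' + 1) (s' + 1) (s' + 1 + m) (k' + 1)
        (flipB s' m k' p).1 (flipB s' m k' p).2 = j + 1) ∨
    (subRank (s' + 1) m (k' + 1) (s' + 1) (s' + 1 + m) (k' + 1) p.1 p.2 = j + 1 ∧
      subRank (s' + 1) m (k' + 1) (s' + 1) (s' + 1 + m) (k' + 1)
        (flipB s' m k' p).1 (flipB s' m k' p).2 = j) := by
  classical
  have hle : s' + 1 + m - 1 ≤ s' + 1 + m := by omega
  set A := subMat (s' + 1) m (k' + 1) (s' + 1) (s' + 1 + m) (k' + 1) p.1 p.2 with hA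
  set B := subMat (s' + 1) m (k' + 1) (s' + 1) (s' + 1 + m) (k' + 1)
    (flipB s' m k' p).1 (flipB s' m k' p).2 with hBdef
  have hfr : ∀ r' : Fin (s' + 1) ⊕ Fin (s' + 1 + m - 1),
      Sum.map id (Fin.castLE hle) r' ≠ Sum.inr (⟨s' + m, by omega⟩ : Fin (s' + 1 + m)) := by
    rintro (a | b) h
    · simp only [Sum.map_inl, id_eq] at h
      exact Sum.inl_ne_inr h
    · simp only [Sum.map_inr, Sum.inr.injEq] at h
      have hb := b.isLt
      have hv := congrArg Fin.val h
      simp only [Fin.coe_castLE] at hv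
      omega
  have hsurj : ∀ r : Fin (s' + 1) ⊕ Fin (s' + 1 + m),
      r ≠ Sum.inr (⟨s' + m, by omega⟩ : Fin (s' + 1 + m)) →
      ∃ r', Sum.map id (Fin.castLE hle) r' = r := by
    rintro (a | b) h
    · exact ⟨Sum.inl a, rfl⟩
    · have hv : (b : ℕ) ≠ s' + m := by
        intro hv
        exact h (congrArg Sum.inr (Fin.ext (by simp [hv])))
      have hb := b.isLt
      refine ⟨Sum.inr ⟨(b : ℕ), by omega⟩, ?_⟩
      simp only [Sum.map_inr]
      exact congrArg Sum.inr (Fin.ext rfl)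
  have hB : ∀ r c, B r c =
      if r = Sum.inr (⟨s' + m, by omega⟩ : Fin (s' + 1 + m)) ∧ c = Fin.last k'
        then A r c + 1 else A r c := by
    intro r c
    rw [hBdef, hA]
    exact subMat_flip_snd s' m k' ⟨s' + m + k', by omega⟩ rfl ⟨s' + m, by omega⟩ rfl
      p.1 p.2 r c
  have e1 : A.submatrix (Sum.map id (Fin.castLE hle)) Fin.castSucc
      = subMat (s' + 1) m (k' + 1) (s' + 1) (s' + 1 + m - 1) k' p.1 p.2 := by
    rw [hA]; ext r c; cases r <;> rfl
  have e2 : A.submatrix (Sum.map id (Fin.castLE hle)) id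
      = subMat (s' + 1) m (k' + 1) (s' + 1) (s' + 1 + m - 1) (k' + 1) p.1 p.2 := by
    rw [hA]; ext r c; cases r <;> rfl
  have e3 : A.submatrix id Fin.castSucc
      = subMat (s' + 1) m (k' + 1) (s' + 1) (s' + 1 + m) k' p.1 p.2 := by
    rw [hA]; ext r c; cases r <;> rfl
  exact dichotomy A B (Sum.map id (Fin.castLE hle))
    (Sum.inr (⟨s' + m, by omega⟩ : Fin (s' + 1 + m)))
    hfr hsurj hB (by rw [e1]; exact h3) (by rw [e2]; exact h4) (by rw [e3]; exact h5)

private lemma L46 (s' m k' : ℕ)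
    (p : (Fin (s' + 1 + (k' + 1) - 1) → ZMod 2) × (Fin (s' + 1 + m + (k' + 1) - 1) → ZMod 2)) :
    subRank (s' + 1) m (k' + 1) (s' + 1) (s' + 1 + m - 1) (k' + 1) p.1 p.2
      ≤ subRank (s' + 1) m (k' + 1) (s' + 1) (s' + 1 + m) (k' + 1) p.1 p.2 := by
  unfold subRank
  have e : (subMat (s' + 1) m (k' + 1) (s' + 1) (s' + 1 + m) (k' + 1) p.1 p.2).submatrix
      (Sum.map id (Fin.castLE (show s' + 1 + m - 1 ≤ s' + 1 + m by omega))) id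
      = subMat (s' + 1) m (k' + 1) (s' + 1) (s' + 1 + m - 1) (k' + 1) p.1 p.2 := by
    ext r c; cases r <;> rfl
  rw [← e]
  exact rank_submatrix_rows_le _ _

private lemma L65 (s' m k' : ℕ)
    (p : (Fin (s' + 1 + (k' + 1) - 1) → ZMod 2) × (Fin (s' + 1 + m + (k' + 1) - 1) → ZMod 2)) :
    subRank (s' + 1) m (k' + 1) (s' + 1) (s' + 1 + m) (k' + 1) p.1 p.2
      ≤ subRank (s' + 1) m (k' + 1) (s' + 1) (s' + 1 + m) k' p.1 p.2 + 1 := by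
  unfold subRank
  have e : (subMat (s' + 1) m (k' + 1) (s' + 1) (s' + 1 + m) (k' + 1) p.1 p.2).submatrix
      id Fin.castSucc = subMat (s' + 1) m (k' + 1) (s' + 1) (s' + 1 + m) k' p.1 p.2 := by
    ext r c; cases r <;> rfl
  rw [← e]
  exact rank_le_castSucc_add_one _

end Dich46

section Counting

private lemma card_iff {γ : Type*} (e : γ → γ) (he : Function.Involutive e)
    (P Q : γ → Prop) (h : ∀ x, P x ↔ Q (e x)) :
    Nat.card {x // P x} = Nat.card {x // Q x} :=
  Nat.card_congr (Equiv.subtypeEquiv he.toPerm h)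

private lemma card_prop_iff {γ : Type*} (P Q : γ → Prop) (h : ∀ x, P x ↔ Q x) :
    Nat.card {x // P x} = Nat.card {x // Q x} :=
  Nat.card_congr (Equiv.subtypeEquivRight h)

private lemma card_split {γ : Type*} [Finite γ] (Q : γ → Prop) (f : γ → ℕ) (j : ℕ)
    (h : ∀ x, Q x → f x = j ∨ f x = j + 1) :
    Nat.card {x // Q x} = Nat.card {x // Q x ∧ f x = j} + Nat.card {x // Q x ∧ f x = j + 1} := by
  classical
  have e2 : {x : {p : γ // Q p} // f x.1 = j} ≃ {p : γ // Q p ∧ f p = j} :=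
    Equiv.subtypeSubtypeEquivSubtypeInter Q (fun y => f y = j)
  have e3 : {x : {p : γ // Q p} // ¬ f x.1 = j} ≃ {p : γ // Q p ∧ ¬ f p = j} :=
    Equiv.subtypeSubtypeEquivSubtypeInter Q (fun y => ¬ f y = j)
  have e4 : {p : γ // Q p ∧ ¬ f p = j} ≃ {p : γ // Q p ∧ f p = j + 1} :=
    Equiv.subtypeEquivRight (by
      intro p
      constructor
      · rintro ⟨hq, h6⟩
        refine ⟨hq, ?_⟩
        rcases h p hq with h' | h'
        · exact absurd h' h6
        · exact h'
      · rintro ⟨hq, h6⟩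
        exact ⟨hq, by omega⟩)
  calc Nat.card {x // Q x}
      = Nat.card ({x : {p : γ // Q p} // f x.1 = j} ⊕ {x : {p : γ // Q p} // ¬ f x.1 = j}) :=
        (Nat.card_congr (Equiv.sumCompl _)).symm
    _ = Nat.card {x : {p : γ // Q p} // f x.1 = j}
        + Nat.card {x : {p : γ // Q p} // ¬ f x.1 = j} := Nat.card_sum
    _ = Nat.card {p : γ // Q p ∧ f p = j} + Nat.card {p : γ // Q p ∧ f p = j + 1} := by
        rw [Nat.card_congr e2, Nat.card_congr (e3.trans e4)]

end Counting

theorem card_double_jump_eq_two_mul_card_stable (s m k j : ℕ) (hs : 2 ≤ s) (hk : 2 ≤ k)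
    (hj : j ≤ min (2 * s + m - 2) (k - 1)) :
    Nat.card {p : (Fin (s + k - 1) → ZMod 2) × (Fin (s + m + k - 1) → ZMod 2) //
        subRank s m k (s - 1) (s + m - 1) (k - 1) p.1 p.2 = j ∧
        subRank s m k (s - 1) (s + m - 1) k p.1 p.2 = j ∧
        subRank s m k s (s + m - 1) (k - 1) p.1 p.2 = j ∧
        subRank s m k s (s + m - 1) k p.1 p.2 = j + 1 ∧
        subRank s m k s (s + m) (k - 1) p.1 p.2 = j ∧
        subRank s m k s (s + m) k p.1 p.2 = j + 1} =
    2 * Nat.card {p : (Fin (s + k - 1) → ZMod 2) × (Fin (s + m + k - 1) → ZMod 2) //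
        subRank s m k (s - 1) (s + m - 1) (k - 1) p.1 p.2 = j ∧
        subRank s m k (s - 1) (s + m - 1) k p.1 p.2 = j ∧
        subRank s m k s (s + m - 1) (k - 1) p.1 p.2 = j ∧
        subRank s m k s (s + m - 1) k p.1 p.2 = j ∧
        subRank s m k s (s + m) (k - 1) p.1 p.2 = j ∧
        subRank s m k s (s + m) k p.1 p.2 = j} := by
  classical
  obtain ⟨s', rfl⟩ : ∃ s', s = s' + 1 := ⟨s - 1, by omega⟩
  obtain ⟨k', rfl⟩ : ∃ k', k = k' + 1 := ⟨k - 1, by omega⟩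
  clear hs hk hj
  simp only [Nat.add_sub_cancel]
  have hc1 : Nat.card {p : (Fin (s' + 1 + (k' + 1) - 1) → ZMod 2) × (Fin (s' + 1 + m + (k' + 1) - 1) → ZMod 2) //
        subRank (s' + 1) m (k' + 1) s' (s' + 1 + m - 1) k' p.1 p.2 = j ∧
        subRank (s' + 1) m (k' + 1) s' (s' + 1 + m - 1) (k' + 1) p.1 p.2 = j ∧
        subRank (s' + 1) m (k' + 1) (s' + 1) (s' + 1 + m - 1) k' p.1 p.2 = j ∧
        subRank (s' + 1) m (k' + 1) (s' + 1) (s' + 1 + m - 1) (k' + 1) p.1 p.2 = j + 1 ∧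
        subRank (s' + 1) m (k' + 1) (s' + 1) (s' + 1 + m) k' p.1 p.2 = j ∧
        subRank (s' + 1) m (k' + 1) (s' + 1) (s' + 1 + m) (k' + 1) p.1 p.2 = j + 1} =
      Nat.card {p : (Fin (s' + 1 + (k' + 1) - 1) → ZMod 2) × (Fin (s' + 1 + m + (k' + 1) - 1) → ZMod 2) //
        subRank (s' + 1) m (k' + 1) s' (s' + 1 + m - 1) k' p.1 p.2 = j ∧
        subRank (s' + 1) m (k' + 1) s' (s' + 1 + m - 1) (k' + 1) p.1 p.2 = j ∧
        subRank (s' + 1) m (k' + 1) (s' + 1) (s' + 1 + m - 1) k' p.1 p.2 = j ∧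
        subRank (s' + 1) m (k' + 1) (s' + 1) (s' + 1 + m - 1) (k' + 1) p.1 p.2 = j ∧
        subRank (s' + 1) m (k' + 1) (s' + 1) (s' + 1 + m) k' p.1 p.2 = j} := by
    apply card_iff (flipA s' m k') (flipA_inv s' m k')
    intro p
    have i1 := rk_flipA s' m k' s' (s' + 1 + m - 1) k' (by omega) p
    have i2 := rk_flipA s' m k' s' (s' + 1 + m - 1) (k' + 1) (by omega) p
    have i3 := rk_flipA s' m k' (s' + 1) (s' + 1 + m - 1) k' (by omega) p
    have i5 := rk_flipA s' m k' (s' + 1) (s' + 1 + m) k' (by omega) p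
    constructor
    · rintro ⟨h1, h2, h3, h4, h5, h6⟩
      refine ⟨by rw [i1]; exact h1, by rw [i2]; exact h2, by rw [i3]; exact h3, ?_,
        by rw [i5]; exact h5⟩
      rcases dich4 s' m k' j p h1 h2 h3 with ⟨hA, hB⟩ | ⟨hA, hB⟩
      · omega
      · exact hB
    · rintro ⟨h1, h2, h3, h4, h5⟩
      rw [i1] at h1; rw [i2] at h2; rw [i3] at h3; rw [i5] at h5
      have h4' : subRank (s' + 1) m (k' + 1) (s' + 1) (s' + 1 + m - 1) (k' + 1) p.1 p.2 = j + 1 := by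
        rcases dich4 s' m k' j p h1 h2 h3 with ⟨hA, hB⟩ | ⟨hA, hB⟩
        · omega
        · exact hA
      have h6' : subRank (s' + 1) m (k' + 1) (s' + 1) (s' + 1 + m) (k' + 1) p.1 p.2 = j + 1 := by
        have a1 := L46 s' m k' p
        have a2 := L65 s' m k' p
        omega
      exact ⟨h1, h2, h3, h4', h5, h6'⟩
  have hc2 : Nat.card {p : (Fin (s' + 1 + (k' + 1) - 1) → ZMod 2) × (Fin (s' + 1 + m + (k' + 1) - 1) → ZMod 2) //
        subRank (s' + 1) m (k' + 1) s' (s' + 1 + m - 1) k' p.1 p.2 = j ∧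
        subRank (s' + 1) m (k' + 1) s' (s' + 1 + m - 1) (k' + 1) p.1 p.2 = j ∧
        subRank (s' + 1) m (k' + 1) (s' + 1) (s' + 1 + m - 1) k' p.1 p.2 = j ∧
        subRank (s' + 1) m (k' + 1) (s' + 1) (s' + 1 + m - 1) (k' + 1) p.1 p.2 = j ∧
        subRank (s' + 1) m (k' + 1) (s' + 1) (s' + 1 + m) k' p.1 p.2 = j} =
      Nat.card {p : (Fin (s' + 1 + (k' + 1) - 1) → ZMod 2) × (Fin (s' + 1 + m + (k' + 1) - 1) → ZMod 2) //
        (subRank (s' + 1) m (k' + 1) s' (s' + 1 + m - 1) k' p.1 p.2 = j ∧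
        subRank (s' + 1) m (k' + 1) s' (s' + 1 + m - 1) (k' + 1) p.1 p.2 = j ∧
        subRank (s' + 1) m (k' + 1) (s' + 1) (s' + 1 + m - 1) k' p.1 p.2 = j ∧
        subRank (s' + 1) m (k' + 1) (s' + 1) (s' + 1 + m - 1) (k' + 1) p.1 p.2 = j ∧
        subRank (s' + 1) m (k' + 1) (s' + 1) (s' + 1 + m) k' p.1 p.2 = j) ∧
        subRank (s' + 1) m (k' + 1) (s' + 1) (s' + 1 + m) (k' + 1) p.1 p.2 = j} +
      Nat.card {p : (Fin (s' + 1 + (k' + 1) - 1) → ZMod 2) × (Fin (s' + 1 + m + (k' + 1) - 1) → ZMod 2) //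
        (subRank (s' + 1) m (k' + 1) s' (s' + 1 + m - 1) k' p.1 p.2 = j ∧
        subRank (s' + 1) m (k' + 1) s' (s' + 1 + m - 1) (k' + 1) p.1 p.2 = j ∧
        subRank (s' + 1) m (k' + 1) (s' + 1) (s' + 1 + m - 1) k' p.1 p.2 = j ∧
        subRank (s' + 1) m (k' + 1) (s' + 1) (s' + 1 + m - 1) (k' + 1) p.1 p.2 = j ∧
        subRank (s' + 1) m (k' + 1) (s' + 1) (s' + 1 + m) k' p.1 p.2 = j) ∧
        subRank (s' + 1) m (k' + 1) (s' + 1) (s' + 1 + m) (k' + 1) p.1 p.2 = j + 1} := by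
    apply card_split
    rintro p ⟨h1, h2, h3, h4, h5⟩
    have a1 := L46 s' m k' p
    have a2 := L65 s' m k' p
    omega
  have hc3 : Nat.card {p : (Fin (s' + 1 + (k' + 1) - 1) → ZMod 2) × (Fin (s' + 1 + m + (k' + 1) - 1) → ZMod 2) //
        (subRank (s' + 1) m (k' + 1) s' (s' + 1 + m - 1) k' p.1 p.2 = j ∧
        subRank (s' + 1) m (k' + 1) s' (s' + 1 + m - 1) (k' + 1) p.1 p.2 = j ∧
        subRank (s' + 1) m (k' + 1) (s' + 1) (s' + 1 + m - 1) k' p.1 p.2 = j ∧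
        subRank (s' + 1) m (k' + 1) (s' + 1) (s' + 1 + m - 1) (k' + 1) p.1 p.2 = j ∧
        subRank (s' + 1) m (k' + 1) (s' + 1) (s' + 1 + m) k' p.1 p.2 = j) ∧
        subRank (s' + 1) m (k' + 1) (s' + 1) (s' + 1 + m) (k' + 1) p.1 p.2 = j + 1} =
      Nat.card {p : (Fin (s' + 1 + (k' + 1) - 1) → ZMod 2) × (Fin (s' + 1 + m + (k' + 1) - 1) → ZMod 2) //
        (subRank (s' + 1) m (k' + 1) s' (s' + 1 + m - 1) k' p.1 p.2 = j ∧
        subRank (s' + 1) m (k' + 1) s' (s' + 1 + m - 1) (k' + 1) p.1 p.2 = j ∧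
        subRank (s' + 1) m (k' + 1) (s' + 1) (s' + 1 + m - 1) k' p.1 p.2 = j ∧
        subRank (s' + 1) m (k' + 1) (s' + 1) (s' + 1 + m - 1) (k' + 1) p.1 p.2 = j ∧
        subRank (s' + 1) m (k' + 1) (s' + 1) (s' + 1 + m) k' p.1 p.2 = j) ∧
        subRank (s' + 1) m (k' + 1) (s' + 1) (s' + 1 + m) (k' + 1) p.1 p.2 = j} := by
    apply card_iff (flipB s' m k') (flipB_inv s' m k')
    intro p
    have i1 := rk_flipB s' m k' s' (s' + 1 + m - 1) k' (by omega) p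
    have i2 := rk_flipB s' m k' s' (s' + 1 + m - 1) (k' + 1) (by omega) p
    have i3 := rk_flipB s' m k' (s' + 1) (s' + 1 + m - 1) k' (by omega) p
    have i4 := rk_flipB s' m k' (s' + 1) (s' + 1 + m - 1) (k' + 1) (by omega) p
    have i5 := rk_flipB s' m k' (s' + 1) (s' + 1 + m) k' (by omega) p
    constructor
    · rintro ⟨⟨h1, h2, h3, h4, h5⟩, h6⟩
      refine ⟨⟨by rw [i1]; exact h1, by rw [i2]; exact h2, by rw [i3]; exact h3,
        by rw [i4]; exact h4, by rw [i5]; exact h5⟩, ?_⟩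
      rcases dich6 s' m k' j p h3 h4 h5 with ⟨hA, hB⟩ | ⟨hA, hB⟩
      · omega
      · exact hB
    · rintro ⟨⟨h1, h2, h3, h4, h5⟩, h6⟩
      rw [i1] at h1; rw [i2] at h2; rw [i3] at h3; rw [i4] at h4; rw [i5] at h5
      refine ⟨⟨h1, h2, h3, h4, h5⟩, ?_⟩
      rcases dich6 s' m k' j p h3 h4 h5 with ⟨hA, hB⟩ | ⟨hA, hB⟩
      · exact absurd hB (by omega)
      · exact hA
  have hc4 : Nat.card {p : (Fin (s' + 1 + (k' + 1) - 1) → ZMod 2) × (Fin (s' + 1 + m + (k' + 1) - 1) → ZMod 2) //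
        (subRank (s' + 1) m (k' + 1) s' (s' + 1 + m - 1) k' p.1 p.2 = j ∧
        subRank (s' + 1) m (k' + 1) s' (s' + 1 + m - 1) (k' + 1) p.1 p.2 = j ∧
        subRank (s' + 1) m (k' + 1) (s' + 1) (s' + 1 + m - 1) k' p.1 p.2 = j ∧
        subRank (s' + 1) m (k' + 1) (s' + 1) (s' + 1 + m - 1) (k' + 1) p.1 p.2 = j ∧
        subRank (s' + 1) m (k' + 1) (s' + 1) (s' + 1 + m) k' p.1 p.2 = j) ∧
        subRank (s' + 1) m (k' + 1) (s' + 1) (s' + 1 + m) (k' + 1) p.1 p.2 = j} =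
      Nat.card {p : (Fin (s' + 1 + (k' + 1) - 1) → ZMod 2) × (Fin (s' + 1 + m + (k' + 1) - 1) → ZMod 2) //
        subRank (s' + 1) m (k' + 1) s' (s' + 1 + m - 1) k' p.1 p.2 = j ∧
        subRank (s' + 1) m (k' + 1) s' (s' + 1 + m - 1) (k' + 1) p.1 p.2 = j ∧
        subRank (s' + 1) m (k' + 1) (s' + 1) (s' + 1 + m - 1) k' p.1 p.2 = j ∧
        subRank (s' + 1) m (k' + 1) (s' + 1) (s' + 1 + m - 1) (k' + 1) p.1 p.2 = j ∧
        subRank (s' + 1) m (k' + 1) (s' + 1) (s' + 1 + m) k' p.1 p.2 = j ∧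
        subRank (s' + 1) m (k' + 1) (s' + 1) (s' + 1 + m) (k' + 1) p.1 p.2 = j} :=
    card_prop_iff _ _ (fun p => by tauto)
  rw [hc1, hc2, hc3, hc4]
  omega
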